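/- arXiv:1207.6481 — 2 statements merged into one kernel-verified Lean document; each statement's English description precedes it below -/
import Mathlib

section
/- Let f_k, p_k, q_k ∈ ℚ[s,t] be defined by the formal power series expansions log(1+tx+sx²) = ∑_{k≥1} f_k x^k, 1/(1+tx+sx²) = ∑_{k≥0} p_k x^k, and -1/(1+tx+sx²)² = ∑_{k≥0} q_k x^k. Then for every k ≥ 1, -(4s - t²)·q_{k-1} + t·p_k = (k+1)²·f_{k+1}. -/
noncomputable section

/-- The polynomial ring ℚ[s,t]. -/
abbrev Rst : Type := MvPolynomial (Fin 2) ℚ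

def s : Rst := MvPolynomial.X 0
def t : Rst := MvPolynomial.X 1

/-- `log(1+v) = ∑_{m≥1} (-1)^{m+1} v^m / m` for `v` with zero constant term. -/
def logOne (v : PowerSeries Rst) : PowerSeries Rst :=
  PowerSeries.mk fun k => ∑ m ∈ Finset.range (k + 1),
    MvPolynomial.C ((-1 : ℚ) ^ (m + 1) / (m : ℚ)) * PowerSeries.coeff k (v ^ m)

/-- `1 + t·x + s·x²` in `ℚ[s,t][[x]]`. -/
def Q : PowerSeries Rst :=
  1 + PowerSeries.C t * PowerSeries.X + PowerSeries.C s * PowerSeries.X ^ 2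

namespace KeyAux

open PowerSeries

/-- `V = t·x + s·x²`. -/
def V : PowerSeries Rst := C t * X + C s * X ^ 2

lemma Q_eq : Q = 1 + V := by rw [Q, V]; ring

/-- low coefficients of powers of `V` vanish -/
lemma coeff_V_pow_eq_zero {j m : ℕ} (h : j < m) : coeff j (V ^ m) = 0 := by
  have hdvd : (X : PowerSeries Rst) ^ m ∣ V ^ m :=
    pow_dvd_pow_of_dvd ⟨C t + C s * X, by rw [V]; ring⟩ m
  exact (X_pow_dvd_iff.mp hdvd) j h

/-- partial sums of the log series -/
def S (M : ℕ) : PowerSeries Rst :=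
  ∑ m ∈ Finset.range (M + 1), C (MvPolynomial.C ((-1 : ℚ) ^ (m + 1) / (m : ℚ))) * V ^ m

lemma coeff_logOne (M j : ℕ) (hj : j ≤ M) :
    coeff j (logOne V) = coeff j (S M) := by
  rw [logOne, coeff_mk, S, map_sum]
  simp only [coeff_C_mul]
  apply Finset.sum_subset
  · exact Finset.range_subset_range.mpr (by omega)
  · intro m _ hm
    rw [coeff_V_pow_eq_zero (by simp at hm ⊢; omega), mul_zero]

lemma DV : d⁄dX Rst V = C t + 2 * C s * X := by
  rw [V]
  rw [map_add, Derivation.leibniz, Derivation.leibniz, Derivation.leibniz_pow]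
  simp
  ring

lemma deriv_S (M : ℕ) :
    Q * d⁄dX Rst (S M) = (1 - (-V) ^ M) * d⁄dX Rst V := by
  have hterm : ∀ i : ℕ,
      d⁄dX Rst (C (MvPolynomial.C ((-1 : ℚ) ^ ((i+1) + 1) / ((i+1 : ℕ) : ℚ))) * V ^ (i+1))
        = (-V) ^ i * d⁄dX Rst V := by
    intro i
    rw [Derivation.leibniz, derivative_C, smul_zero, add_zero, Derivation.leibniz_pow]
    have : (C (MvPolynomial.C ((-1 : ℚ) ^ ((i+1) + 1) / ((i+1 : ℕ) : ℚ)))) * ((i+1 : ℕ) : PowerSeries Rst)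
        = C (MvPolynomial.C ((-1 : ℚ) ^ i)) := by
      have : ((i+1 : ℕ) : PowerSeries Rst) = C (MvPolynomial.C ((i+1 : ℕ) : ℚ)) := by
        simp [map_natCast]
      rw [this, ← map_mul, ← map_mul]
      congr 1
      congr 1
      field_simp
      ring
    simp only [smul_eq_mul, nsmul_eq_mul, Nat.add_sub_cancel]
    rw [show (C (MvPolynomial.C ((-1 : ℚ) ^ ((i+1) + 1) / ((i+1 : ℕ) : ℚ)))) * (((i+1 : ℕ) : PowerSeries Rst) * (V ^ i * d⁄dX Rst V)) = ((C (MvPolynomial.C ((-1 : ℚ) ^ ((i+1) + 1) / ((i+1 : ℕ) : ℚ)))) * ((i+1 : ℕ) : PowerSeries Rst)) * (V ^ i * d⁄dX Rst V) by ring, this]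
    have hC : (C (MvPolynomial.C ((-1 : ℚ) ^ i))) = ((-1 : PowerSeries Rst) ^ i) := by
      simp [map_pow]
    rw [hC, neg_pow]
    ring
  have hDS : d⁄dX Rst (S M) = (∑ i ∈ Finset.range M, (-V) ^ i) * d⁄dX Rst V := by
    rw [S, map_sum, Finset.sum_range_succ']
    have h0 : d⁄dX Rst (C (MvPolynomial.C ((-1 : ℚ) ^ (0 + 1) / ((0 : ℕ) : ℚ))) * V ^ 0) = 0 := by
      simp
    rw [h0, add_zero, Finset.sum_congr rfl (fun i _ => hterm i), ← Finset.sum_mul]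
  rw [hDS, Q_eq]
  have hgeom := geom_sum_mul (-V) M
  have : (1 + V) * (∑ i ∈ Finset.range M, (-V) ^ i) = 1 - (-V) ^ M := by
    have : (1 + V) = -((-V) - 1) := by ring
    rw [this, neg_mul, mul_comm, hgeom]
    ring
  rw [← mul_assoc, this]

/-- The key series identity: `Q · d/dx log(1+V) = dV/dx`. -/
lemma key : Q * d⁄dX Rst (logOne V) = d⁄dX Rst V := by
  apply PowerSeries.ext; intro n
  have hsplit : logOne V = S (n + 1) + (logOne V - S (n + 1)) := by ring
  have hE : ∀ j ≤ n + 1, coeff j (logOne V - S (n + 1)) = 0 := by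
    intro j hj
    rw [map_sub, coeff_logOne (n+1) j hj, sub_self]
  have hDE : ∀ j ≤ n, coeff j (d⁄dX Rst (logOne V - S (n + 1))) = 0 := by
    intro j hj
    rw [coeff_derivative, hE (j+1) (by omega), zero_mul]
  calc coeff n (Q * d⁄dX Rst (logOne V))
      = coeff n (Q * d⁄dX Rst (S (n+1)))
        + coeff n (Q * d⁄dX Rst (logOne V - S (n+1))) := by
        rw [← map_add, ← mul_add, ← map_add, ← hsplit]
    _ = coeff n (Q * d⁄dX Rst (S (n+1))) := by
        have : coeff n (Q * d⁄dX Rst (logOne V - S (n+1))) = 0 := by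
          rw [coeff_mul]
          apply Finset.sum_eq_zero
          intro p hp
          rw [Finset.HasAntidiagonal.mem_antidiagonal] at hp
          rw [hDE p.2 (by omega), mul_zero]
        rw [this, add_zero]
    _ = coeff n ((1 - (-V) ^ (n+1)) * d⁄dX Rst V) := by rw [deriv_S]
    _ = coeff n (d⁄dX Rst V) := by
        rw [sub_mul, one_mul, map_sub]
        have : coeff n ((-V) ^ (n+1) * d⁄dX Rst V) = 0 := by
          rw [coeff_mul]
          apply Finset.sum_eq_zero
          intro p hp
          rw [Finset.HasAntidiagonal.mem_antidiagonal] at hp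
          have hv : coeff p.1 ((-V) ^ (n+1)) = 0 := by
            have hc : ((-1 : PowerSeries Rst) ^ (n+1)) = C ((-1 : Rst)^(n+1)) := by
              simp [map_pow]
            rw [neg_pow, hc, coeff_C_mul,
              coeff_V_pow_eq_zero (show p.1 < n+1 by omega), mul_zero]
          rw [hv, zero_mul]
        rw [this, sub_zero]

end KeyAux

open PowerSeries KeyAux in
/-- With `f_k`, `p_k`, `q_k` defined by `log(1+tx+sx²) = ∑ f_k x^k`,
`1/(1+tx+sx²) = ∑ p_k x^k` and `-1/(1+tx+sx²)² = ∑ q_k x^k`, one has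
`-(4s-t²)·q_{k-1} + t·p_k = (k+1)²·f_{k+1}` for every `k ≥ 1`. -/
theorem key_relation (P N : PowerSeries Rst) (hP : Q * P = 1) (hN : Q ^ 2 * N = -1)
    (k : ℕ) (hk : 1 ≤ k) :
    -(4 * s - t ^ 2) * PowerSeries.coeff (k - 1) N
        + t * PowerSeries.coeff k P
      = ((k + 1 : ℕ) : Rst) ^ 2 *
          PowerSeries.coeff (k + 1)
            (logOne (PowerSeries.C t * PowerSeries.X
              + PowerSeries.C s * PowerSeries.X ^ 2)) := by
  have hVdef : PowerSeries.C t * PowerSeries.X + PowerSeries.C s * PowerSeries.X ^ 2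
      = V := rfl
  rw [hVdef]
  set a := d⁄dX Rst (logOne V) with ha
  set b := d⁄dX Rst a with hb
  -- h1 : Q * a = C t + 2 C s X
  have h1 : Q * a = C t + 2 * C s * X := by rw [ha, key, DV]
  -- h2 : differentiate h1
  have h2 : Q * b + a * (C t + 2 * C s * X) = 2 * C s := by
    have := congrArg (d⁄dX Rst) h1
    rw [Derivation.leibniz, smul_eq_mul, smul_eq_mul] at this
    have hDQ : d⁄dX Rst Q = C t + 2 * C s * X := by
      rw [Q_eq, map_add, Derivation.map_one_eq_zero, zero_add, DV]
    have hrhs : d⁄dX Rst (C t + 2 * C s * X) = 2 * C s := by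
      rw [map_add, derivative_C, zero_add]
      rw [show (2 : PowerSeries Rst) * C s * X = C s * X + C s * X by ring,
        map_add, Derivation.leibniz, smul_eq_mul, smul_eq_mul, derivative_C, derivative_X]
      ring
    rw [hDQ, hrhs] at this
    rw [hb]; linear_combination this
  -- leibniz for X * a
  have hL : d⁄dX Rst (X * a) = a + X * b := by
    rw [Derivation.leibniz, smul_eq_mul, smul_eq_mul, derivative_X, hb]; ring
  have hQdef : Q = 1 + C t * X + C s * X ^ 2 := rfl
  have hCE : C (t ^ 2 - 4 * s) = (C t) ^ 2 - 4 * C s := by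
    rw [map_sub, map_pow, map_mul, map_ofNat]
  -- the key series identity
  have B : Q ^ 2 * d⁄dX Rst (X * a)
      = Q ^ 2 * (C t * P + C (t ^ 2 - 4 * s) * (X * N)) := by
    rw [hL, hCE]
    rw [hQdef] at h1 h2 hP hN ⊢
    linear_combination (1 + C t * X + C s * X ^ 2) * h1
      + X * (1 + C t * X + C s * X ^ 2) * h2
      - X * (C t + 2 * C s * X) * h1
      - C t * (1 + C t * X + C s * X ^ 2) * hP
      - ((C t) ^ 2 - 4 * C s) * X * hN
  have hQne : (Q : PowerSeries Rst) ^ 2 ≠ 0 := by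
    intro h
    rw [h, zero_mul] at hN
    exact (by simp : (0 : PowerSeries Rst) ≠ -1) hN
  have B' : d⁄dX Rst (X * a) = C t * P + C (t ^ 2 - 4 * s) * (X * N) :=
    mul_left_cancel₀ hQne B
  -- take coefficients
  obtain ⟨j, rfl⟩ : ∃ j, k = j + 1 := ⟨k - 1, by omega⟩
  have hc := congrArg (coeff (j + 1)) B'
  rw [coeff_derivative, coeff_succ_X_mul, ha, coeff_derivative, map_add, coeff_C_mul,
    coeff_C_mul, coeff_succ_X_mul] at hc
  simp only [Nat.add_sub_cancel]
  push_cast at hc ⊢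
  linear_combination -hc
end
end

section
/- Let f_k and p_k ∈ ℚ[s,t] be defined by log(1+tx+sx²) = ∑_{k≥1} f_k x^k and 1/(1+tx+sx²) = ∑_{k≥0} p_k x^k as formal power series. Then for every n ≥ 0, (4s - t²)·p_n = 2(n+2)·f_{n+2} + (n+1)·t·f_{n+1}. -/
noncomputable section

open PowerSeries Finset

def vv : PowerSeries Rst := C t * X + C s * X ^ 2

lemma coeff_vv_pow {k m : ℕ} (h : k < m) : coeff k (vv ^ m) = 0 := by
  obtain ⟨w, hw⟩ : (X : PowerSeries Rst) ^ m ∣ vv ^ m := by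
    apply pow_dvd_pow_of_dvd
    rw [X_dvd_iff]
    simp [vv]
  rw [hw, coeff_mul]
  apply Finset.sum_eq_zero
  intro p hp
  rw [coeff_X_pow, if_neg, zero_mul]
  have := Finset.HasAntidiagonal.mem_antidiagonal.mp hp
  omega

def SS (N : ℕ) : PowerSeries Rst :=
  ∑ m ∈ range (N + 1), C (MvPolynomial.C ((-1 : ℚ) ^ (m + 1) / (m : ℚ))) * vv ^ m

lemma coeff_logOne_eq {N k : ℕ} (h : k ≤ N) :
    coeff k (logOne vv) = coeff k (SS N) := by
  rw [logOne, coeff_mk, SS, map_sum]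
  simp_rw [coeff_C_mul]
  exact Finset.sum_subset (Finset.range_subset_range.mpr (by omega))
    (fun m _ hm' => by rw [coeff_vv_pow (by simp at hm'; omega), mul_zero])

lemma DS (N : ℕ) :
    d⁄dX Rst (SS N) = (∑ i ∈ range N, (-vv) ^ i) * d⁄dX Rst vv := by
  rw [SS, map_sum, Finset.sum_range_succ']
  have h0 : d⁄dX Rst (C (MvPolynomial.C ((-1 : ℚ) ^ (0 + 1) / ((0 : ℕ) : ℚ))) * vv ^ 0) = 0 := by
    simp
  rw [h0, add_zero, Finset.sum_mul]
  apply Finset.sum_congr rfl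
  intro i _
  rw [Derivation.leibniz, Derivation.leibniz_pow, derivative_C, smul_zero, add_zero]
  simp only [smul_eq_mul, nsmul_eq_mul]
  rw [← mul_assoc, ← mul_assoc]
  have : (C (MvPolynomial.C ((-1 : ℚ) ^ (i + 1 + 1) / ((i + 1 : ℕ) : ℚ)))) * ((i + 1 : ℕ) : PowerSeries Rst) * vv ^ (i + 1 - 1) = (-vv) ^ i := by
    have h1 : ((i + 1 : ℕ) : PowerSeries Rst) = C ((i + 1 : ℕ) : Rst) := by
      simp [map_natCast]
    rw [h1, ← map_mul]
    have h2 : (MvPolynomial.C ((-1 : ℚ) ^ (i + 1 + 1) / ((i + 1 : ℕ) : ℚ))) * ((i + 1 : ℕ) : Rst) = ((-1 : Rst) ^ i) := by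
      rw [← MvPolynomial.C_eq_coe_nat, ← map_mul]
      have : ((-1 : ℚ) ^ (i + 1 + 1) / ((i + 1 : ℕ) : ℚ)) * ((i+1 : ℕ) : ℚ) = (-1 : ℚ) ^ i := by
        rw [div_mul_cancel₀]
        · rw [pow_succ, pow_succ]; ring
        · exact Nat.cast_ne_zero.mpr i.succ_ne_zero
      rw [this, map_pow, map_neg, map_one]
    rw [h2, map_pow, map_neg, map_one, Nat.add_sub_cancel, neg_pow, ← mul_pow]
    ring
  rw [this]

lemma coeff_neg_vv_pow_mul {k m : ℕ} (h : k < m) (g : PowerSeries Rst) :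
    coeff k ((-vv) ^ m * g) = 0 := by
  have hrw : (-vv) ^ m * g = vv ^ m * ((-1) ^ m * g) := by ring
  rw [hrw, coeff_mul]
  apply Finset.sum_eq_zero
  intro p hp
  rw [coeff_vv_pow (show p.1 < m by have := Finset.HasAntidiagonal.mem_antidiagonal.mp hp; omega), zero_mul]

lemma main (n : ℕ) :
    coeff n ((1 + vv) * d⁄dX Rst (logOne vv)) = coeff n (d⁄dX Rst vv) := by
  have h1 : coeff n ((1 + vv) * d⁄dX Rst (logOne vv))
      = coeff n ((1 + vv) * d⁄dX Rst (SS (n + 1))) := by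
    rw [coeff_mul, coeff_mul]
    apply Finset.sum_congr rfl
    intro p hp
    congr 1
    rw [coeff_derivative, coeff_derivative,
      coeff_logOne_eq (show p.2 + 1 ≤ n + 1 by
        have := Finset.HasAntidiagonal.mem_antidiagonal.mp hp; omega)]
  have hgeom : (1 + vv) * (∑ i ∈ range (n + 1), (-vv) ^ i) = 1 - (-vv) ^ (n + 1) := by
    linear_combination -(geom_sum_mul (-vv) (n + 1))
  rw [h1, DS, ← mul_assoc, hgeom, sub_mul, one_mul, map_sub,
    coeff_neg_vv_pow_mul (Nat.lt_succ_self n), sub_zero]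

lemma hDvv : d⁄dX Rst vv = C t + 2 * C s * X := by
  rw [vv, map_add, Derivation.leibniz, Derivation.leibniz, Derivation.leibniz_pow,
    derivative_C, derivative_C, derivative_X]
  simp only [smul_eq_mul, nsmul_eq_mul, smul_zero]
  push_cast
  ring

/-- With `f_k` and `p_k` defined by `log(1+tx+sx²) = ∑_{k≥1} f_k x^k` and
`1/(1+tx+sx²) = ∑_{k≥0} p_k x^k`, one has
`(4s - t²)·p_n = 2(n+2)·f_{n+2} + (n+1)·t·f_{n+1}` for every `n ≥ 0`. -/
theorem u_pn_relation (P : PowerSeries Rst) (hP : Q * P = 1) (n : ℕ) :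
    (4 * s - t ^ 2) * PowerSeries.coeff n P
      = 2 * ((n + 2 : ℕ) : Rst) *
          PowerSeries.coeff (n + 2)
            (logOne (PowerSeries.C t * PowerSeries.X
              + PowerSeries.C s * PowerSeries.X ^ 2))
        + ((n + 1 : ℕ) : Rst) * t *
          PowerSeries.coeff (n + 1)
            (logOne (PowerSeries.C t * PowerSeries.X
              + PowerSeries.C s * PowerSeries.X ^ 2)) := by
  have hv : (PowerSeries.C t * PowerSeries.X
      + PowerSeries.C s * PowerSeries.X ^ 2 : PowerSeries Rst) = vv := rfl
  rw [hv]
  have hserie : (1 + vv) * d⁄dX Rst (logOne vv) = d⁄dX Rst vv := PowerSeries.ext main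
  have hQ : Q = 1 + vv := by rw [Q, vv]; ring
  have hDL : d⁄dX Rst (logOne vv) = P * d⁄dX Rst vv := by
    calc d⁄dX Rst (logOne vv) = (Q * P) * d⁄dX Rst (logOne vv) := by rw [hP, one_mul]
      _ = P * ((1 + vv) * d⁄dX Rst (logOne vv)) := by rw [hQ]; ring
      _ = P * d⁄dX Rst vv := by rw [hserie]
  have e2 : 2 * ((n + 2 : ℕ) : Rst) * coeff (n + 2) (logOne vv)
      = 2 * coeff (n + 1) (d⁄dX Rst (logOne vv)) := by
    rw [coeff_derivative]; push_cast; ring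
  have e1 : ((n + 1 : ℕ) : Rst) * t * coeff (n + 1) (logOne vv)
      = t * coeff n (d⁄dX Rst (logOne vv)) := by
    rw [coeff_derivative]; push_cast; ring
  rw [e2, e1, hDL, hDvv]
  have hC : (4 * C s - C t ^ 2) = C (4 * s - t ^ 2) := by
    rw [map_sub, map_mul, map_pow, map_ofNat]
  have h2C : (2 : PowerSeries Rst) = C 2 := (map_ofNat C 2).symm
  calc (4 * s - t ^ 2) * coeff n P
      = coeff (n + 1) (C (4 * s - t ^ 2) * (X * P)) := by
        rw [coeff_C_mul, coeff_succ_X_mul]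
    _ = coeff (n + 1) (2 * C t * (Q * P)
          + (4 * C s - C t ^ 2) * (X * P)) := by
        rw [hP, mul_one, hC, map_add]
        rw [show (2 : PowerSeries Rst) * C t = C (2 * t) by
          rw [h2C, ← map_mul]]
        rw [coeff_C, if_neg (Nat.succ_ne_zero n), zero_add]
    _ = coeff (n + 1) (2 * (P * (C t + 2 * C s * X))
          + C t * (X * (P * (C t + 2 * C s * X)))) := by
        rw [hQ, vv]; ring_nf
    _ = 2 * coeff (n + 1) (P * (C t + 2 * C s * X))
          + t * coeff n (P * (C t + 2 * C s * X)) := by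
        rw [map_add, coeff_C_mul, coeff_succ_X_mul, h2C, coeff_C_mul, ← h2C]
end
end
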